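/- Assume V⁺ admits a monomial parametrization with exponent matrix A (data p, A, K, ψ) and that the cone generator matrix E has no zero row. Let δ ∈ {−1,0,1}^n with δ ≠ 0 (a sign pattern, as arises in sign(rs(A)) ∩ sign(im(S))), and let F be any predicate on ℝ^{n−s}. Then there exist k ∈ K, c ∈ im₊(Z) and distinct a, b ∈ ℝ_{>0}^n such that (k,a) ∈ V⁺, (k,b) ∈ V⁺, Za = Zb = c, sign(b − a) = δ and F(c) holds, if and only if there exist a ∈ ℝ_{>0}^n and ξ ∈ ℝ_{>0}^{n−p} such that Z((ξ^A − 𝟙)⋆a) = 0, sign(ξ^A − 𝟙) = δ and F(Za) holds. -/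
import Mathlib


open Matrix

noncomputable section

/-- The monomial map φ: `phi Y x j = ∏ i, x i ^ Y i j`. -/
def phi {n r : ℕ} (Y : Matrix (Fin n) (Fin r) ℕ) (x : Fin n → ℝ) : Fin r → ℝ :=
  fun j => ∏ i, x i ^ Y i j

/-- The positive steady state variety V⁺. -/
def Vplus {n r : ℕ} (Y : Matrix (Fin n) (Fin r) ℕ) (S : Matrix (Fin n) (Fin r) ℝ) :
    Set ((Fin r → ℝ) × (Fin n → ℝ)) :=
  {p | (∀ j, 0 < p.1 j) ∧ (∀ i, 0 < p.2 i) ∧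
    S.mulVec (fun j => p.1 j * phi Y p.2 j) = 0}

/-- `E` is a cone generator matrix for `S`:
`E` is nonnegative and `ker S ∩ ℝ_{≥0}^r = {Eλ : λ ≥ 0}`. -/
def IsConeGenMatrix {n r d : ℕ} (S : Matrix (Fin n) (Fin r) ℝ)
    (E : Matrix (Fin r) (Fin d) ℝ) : Prop :=
  (∀ j l, 0 ≤ E j l) ∧
  {v : Fin r → ℝ | S.mulVec v = 0 ∧ ∀ j, 0 ≤ v j} =
    {v : Fin r → ℝ | ∃ lam : Fin d → ℝ, (∀ l, 0 ≤ lam l) ∧ v = E.mulVec lam}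

/-- The coefficient cone Λ(E). -/
def Lambda {r d : ℕ} (E : Matrix (Fin r) (Fin d) ℝ) : Set (Fin d → ℝ) :=
  {lam | (∀ l, 0 ≤ lam l) ∧ ∀ j, 0 < E.mulVec lam j}

/-- `ξ^B`: for a rational `q × m` matrix `B`, `(ξ^B) j = ∏ i, ξ i ^ (B i j)` (real powers). -/
def vecPow {q m : ℕ} (ξ : Fin q → ℝ) (B : Matrix (Fin q) (Fin m) ℚ) : Fin m → ℝ :=
  fun j => ∏ i, ξ i ^ ((B i j : ℝ))

/-- V⁺ admits a monomial parametrization with exponent matrix `A` (data `p`, `A`, `K`, `ψ`). -/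
def IsMonomialParamExp {n r : ℕ} (Y : Matrix (Fin n) (Fin r) ℕ)
    (S : Matrix (Fin n) (Fin r) ℝ) (p : ℕ) (A : Matrix (Fin (n - p)) (Fin n) ℚ)
    (K : Set (Fin r → ℝ)) (ψ : (Fin r → ℝ) → (Fin n → ℝ)) : Prop :=
  p < n ∧ A.rank = n - p ∧ (∀ k ∈ K, ∀ j, 0 < k j) ∧ (∀ k ∈ K, ∀ i, 0 < ψ k i) ∧
  ∀ k x, (∀ j : Fin r, 0 < k j) → (∀ i : Fin n, 0 < x i) →
    ((k, x) ∈ Vplus Y S ↔ k ∈ K ∧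
      ∃ ξ : Fin (n - p) → ℝ, (∀ l, 0 < ξ l) ∧ x = fun i => ψ k i * vecPow ξ A i)

/-- `Z` is a conservation matrix for `S` (with `s = rank S`):
its rows form a basis of the left kernel of `S`. -/
def IsConservationMatrix {n r : ℕ} (S : Matrix (Fin n) (Fin r) ℝ) (s : ℕ)
    (Z : Matrix (Fin (n - s)) (Fin n) ℝ) : Prop :=
  S.rank = s ∧ s < n ∧ LinearIndependent ℝ (fun i => Z i) ∧
    Submodule.span ℝ (Set.range (fun i => Z i)) = LinearMap.ker S.vecMulLinear

/-- `im₊(Z) = {Zx : x ≥ 0}`. -/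
def imPos {m n : ℕ} (Z : Matrix (Fin m) (Fin n) ℝ) : Set (Fin m → ℝ) :=
  {c | ∃ x : Fin n → ℝ, (∀ i, 0 ≤ x i) ∧ c = Z.mulVec x}

/-- The real row space of a rational matrix. -/
def rowSpace {q m : ℕ} (A : Matrix (Fin q) (Fin m) ℚ) : Submodule ℝ (Fin m → ℝ) :=
  Submodule.span ℝ (Set.range (fun l => fun i => ((A l i : ℝ))))

/-- The column space (image) of `S`. -/
def colSpace {n r : ℕ} (S : Matrix (Fin n) (Fin r) ℝ) : Submodule ℝ (Fin n → ℝ) :=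
  LinearMap.range S.mulVecLin

/-- Componentwise sign of a vector. -/
def signVec {m : ℕ} (v : Fin m → ℝ) : Fin m → ℝ := fun i => Real.sign (v i)

lemma vecPow_pos {q m : ℕ} {ξ : Fin q → ℝ} (hξ : ∀ i, 0 < ξ i)
    (B : Matrix (Fin q) (Fin m) ℚ) (j : Fin m) : 0 < vecPow ξ B j :=
  Finset.prod_pos fun i _ => Real.rpow_pos_of_pos (hξ i) _

lemma vecPow_mul {q m : ℕ} {ξ η : Fin q → ℝ} (hξ : ∀ i, 0 < ξ i) (hη : ∀ i, 0 < η i)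
    (B : Matrix (Fin q) (Fin m) ℚ) (j : Fin m) :
    vecPow (fun i => ξ i * η i) B j = vecPow ξ B j * vecPow η B j := by
  unfold vecPow
  rw [← Finset.prod_mul_distrib]
  exact Finset.prod_congr rfl fun i _ => Real.mul_rpow (hξ i).le (hη i).le

lemma phi_pos {n r : ℕ} (Y : Matrix (Fin n) (Fin r) ℕ) {x : Fin n → ℝ}
    (hx : ∀ i, 0 < x i) (j : Fin r) : 0 < phi Y x j :=
  Finset.prod_pos fun i _ => pow_pos (hx i) _

lemma sign_mul_pos {x a : ℝ} (ha : 0 < a) : Real.sign (x * a) = Real.sign x := by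
  rcases lt_trichotomy x 0 with h | h | h
  · rw [Real.sign_of_neg h, Real.sign_of_neg (mul_neg_of_neg_of_pos h ha)]
  · rw [h, zero_mul, Real.sign_zero]
  · rw [Real.sign_of_pos h, Real.sign_of_pos (mul_pos h ha)]

/-- multistationarity for a prescribed sign pattern δ together with a
constraint F on the total concentrations, characterized without rate constants. -/
theorem multistationarity_with_sign_and_constraints {n r d s p : ℕ} (hn : 1 ≤ n) (hr : 1 ≤ r)
    (Y : Matrix (Fin n) (Fin r) ℕ) (S : Matrix (Fin n) (Fin r) ℝ)
    (A : Matrix (Fin (n - p)) (Fin n) ℚ) (K : Set (Fin r → ℝ))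
    (ψ : (Fin r → ℝ) → (Fin n → ℝ)) (hparam : IsMonomialParamExp Y S p A K ψ)
    (E : Matrix (Fin r) (Fin d) ℝ) (hE : IsConeGenMatrix S E)
    (hrow : ∀ j, ∃ l, E j l ≠ 0)
    (Z : Matrix (Fin (n - s)) (Fin n) ℝ) (hZ : IsConservationMatrix S s Z)
    (δ : Fin n → ℝ) (hδ : ∀ i, δ i = -1 ∨ δ i = 0 ∨ δ i = 1) (hδ0 : δ ≠ 0)
    (F : (Fin (n - s) → ℝ) → Prop) :
    (∃ k ∈ K, ∃ c ∈ imPos Z, ∃ a b : Fin n → ℝ, a ≠ b ∧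
        (k, a) ∈ Vplus Y S ∧ (k, b) ∈ Vplus Y S ∧
        Z.mulVec a = c ∧ Z.mulVec b = c ∧ signVec (b - a) = δ ∧ F c) ↔
      (∃ a : Fin n → ℝ, (∀ i, 0 < a i) ∧ ∃ ξ : Fin (n - p) → ℝ, (∀ l, 0 < ξ l) ∧
        Z.mulVec (fun i => (vecPow ξ A i - 1) * a i) = 0 ∧
        signVec (fun i => vecPow ξ A i - 1) = δ ∧
        F (Z.mulVec a)) := by
  obtain ⟨hp, hrank, hKpos, hψpos, hiff⟩ := hparam
  constructor
  · rintro ⟨k, hkK, c, hc, a, b, hab, haV, hbV, hZa, hZb, hsign, hF⟩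
    obtain ⟨hk, ha, hSa⟩ := haV
    obtain ⟨-, hb, hSb⟩ := hbV
    obtain ⟨-, ξa, hξa, hae⟩ := (hiff k a hk ha).mp ⟨hk, ha, hSa⟩
    obtain ⟨-, ξb, hξb, hbe⟩ := (hiff k b hk hb).mp ⟨hk, hb, hSb⟩
    set ξ : Fin (n - p) → ℝ := fun l => ξb l / ξa l with hξdef
    have hξ : ∀ l, 0 < ξ l := fun l => div_pos (hξb l) (hξa l)
    have hvb : ∀ i, vecPow ξb A i = vecPow ξ A i * vecPow ξa A i := by
      intro i
      rw [← vecPow_mul hξ hξa]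
      congr 1
      funext l
      exact (div_mul_cancel₀ _ (hξa l).ne').symm
    have hba : ∀ i, b i - a i = (vecPow ξ A i - 1) * a i := by
      intro i
      have : b i = vecPow ξ A i * a i := by
        rw [hbe, hae]; simp only [hvb i]; ring
      rw [this]; ring
    refine ⟨a, ha, ξ, hξ, ?_, ?_, ?_⟩
    · have : (fun i => (vecPow ξ A i - 1) * a i) = b - a := by
        funext i; rw [Pi.sub_apply, hba i]
      rw [this, Matrix.mulVec_sub, hZa, hZb, sub_self]
    · funext i
      have := congrFun hsign i
      rw [← this]
      simp only [signVec, Pi.sub_apply, hba i, sign_mul_pos (ha i)]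
    · rwa [hZa]
  · rintro ⟨a, ha, ξ, hξ, hZ0, hsign, hF⟩
    -- construct a positive vector in ker S ∩ ℝ≥0
    set v : Fin r → ℝ := E.mulVec (fun _ => 1) with hv
    have hvmem : v ∈ {v : Fin r → ℝ | ∃ lam : Fin d → ℝ, (∀ l, 0 ≤ lam l) ∧ v = E.mulVec lam} :=
      ⟨fun _ => 1, fun _ => zero_le_one, rfl⟩
    rw [← hE.2] at hvmem
    obtain ⟨hSv, hvnn⟩ := hvmem
    have hvpos : ∀ j, 0 < v j := by
      intro j
      obtain ⟨l, hl⟩ := hrow j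
      have hl' : 0 < E j l * 1 := by
        rw [mul_one]; exact lt_of_le_of_ne (hE.1 j l) (Ne.symm hl)
      exact Finset.sum_pos' (fun l' _ => mul_nonneg (hE.1 j l') zero_le_one)
        ⟨l, Finset.mem_univ l, hl'⟩
    set k : Fin r → ℝ := fun j => v j / phi Y a j with hkdef
    have hk : ∀ j, 0 < k j := fun j => div_pos (hvpos j) (phi_pos Y ha j)
    have hkv : (fun j => k j * phi Y a j) = v := by
      funext j
      exact div_mul_cancel₀ _ (phi_pos Y ha j).ne'
    have haV : (k, a) ∈ Vplus Y S := ⟨hk, ha, by rw [hkv]; exact hSv⟩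
    obtain ⟨hkK, ξa, hξa, hae⟩ := (hiff k a hk ha).mp haV
    set b : Fin n → ℝ := fun i => vecPow ξ A i * a i with hbdef
    have hb : ∀ i, 0 < b i := fun i => mul_pos (vecPow_pos hξ A i) (ha i)
    have hbe : b = fun i => ψ k i * vecPow (fun l => ξ l * ξa l) A i := by
      funext i
      rw [hbdef]
      simp only [vecPow_mul hξ hξa]
      rw [hae]; ring
    have hbV : (k, b) ∈ Vplus Y S :=
      (hiff k b hk hb).mpr ⟨hkK, fun l => ξ l * ξa l,
        fun l => mul_pos (hξ l) (hξa l), hbe⟩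
    have hba : (fun i => (vecPow ξ A i - 1) * a i) = b - a := by
      funext i; rw [Pi.sub_apply, hbdef]; ring
    have hZab : Z.mulVec b = Z.mulVec a := by
      have := hZ0
      rw [hba, Matrix.mulVec_sub] at this
      exact sub_eq_zero.mp this
    refine ⟨k, hkK, Z.mulVec a, ⟨a, fun i => (ha i).le, rfl⟩, a, b, ?_, haV, hbV, rfl, hZab,
      ?_, hF⟩
    · obtain ⟨i, hi⟩ := Function.ne_iff.mp hδ0
      intro hab
      apply hi
      have h1 := congrFun hsign i
      have hbi : b i = a i := by rw [← hab]
      have h0 : (vecPow ξ A i - 1) * a i = 0 := by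
        rw [congrFun hba i, Pi.sub_apply, hbi, sub_self]
      have h2 : vecPow ξ A i - 1 = 0 := by
        rcases mul_eq_zero.mp h0 with h | h
        · exact h
        · exact absurd h (ha i).ne'
      simp only [Pi.zero_apply]
      rw [← h1]
      simp [signVec, h2]
    · funext i
      have := congrFun hsign i
      rw [← this]
      simp only [signVec, Pi.sub_apply]
      have h3 : b i - a i = (vecPow ξ A i - 1) * a i := (congrFun hba i).symm
      rw [h3, sign_mul_pos (ha i)]
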